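/- As the kernel width σ → ∞, the correntropy with Gaussian kernel satisfies V_σ(x,y) = 1/(√(2π)σ) − (1/(2√(2π)σ³)) E[(x−y)²] + O(σ⁻⁵); in particular, √(2π)σ³ (1/(√(2π)σ) − V_σ(x,y)) → ½ E[(x−y)²], so correntropy recovers the second-order statistic E[(x−y)²] in the large-bandwidth limit. -/

import Mathlib

open MeasureTheory Filter Asymptotics

lemma exp_neg_quad_bound {t : ℝ} (ht : 0 ≤ t) :
    |Real.exp (-t) - (1 - t)| ≤ t ^ 2 / 2 := by
  have h1 : 1 - t ≤ Real.exp (-t) := Real.one_sub_le_exp_neg t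
  have h2 : Real.exp (-t) ≤ 1 - t + t ^ 2 / 2 := by
    have hq : 1 + t + t ^ 2 / 2 ≤ Real.exp t := Real.quadratic_le_exp_of_nonneg ht
    have hnn : (0:ℝ) ≤ 1 - t + t ^ 2 / 2 := by nlinarith [sq_nonneg (t-1)]
    rw [Real.exp_neg, inv_le_iff_one_le_mul₀ (Real.exp_pos t)]
    nlinarith [mul_le_mul_of_nonneg_left hq hnn, sq_nonneg (t^2)]
  rw [abs_le]
  constructor <;> nlinarith

lemma key_est {Ω : Type*} [MeasurableSpace Ω] (P : Measure Ω) [IsProbabilityMeasure P]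
    (d : Ω → ℝ) (hd : Measurable d)
    (h4 : Integrable (fun ω => d ω ^ 4) P) (h2 : Integrable (fun ω => d ω ^ 2) P)
    {σ : ℝ} (hσ : 0 < σ) :
    |(∫ ω, (1 / (Real.sqrt (2 * Real.pi) * σ)) * Real.exp (-(d ω) ^ 2 / (2 * σ ^ 2)) ∂P)
      - (1 / (Real.sqrt (2 * Real.pi) * σ)
        - (1 / (2 * Real.sqrt (2 * Real.pi) * σ ^ 3)) * ∫ ω, d ω ^ 2 ∂P)|
      ≤ (∫ ω, d ω ^ 4 ∂P) / (8 * Real.sqrt (2 * Real.pi)) * σ⁻¹ ^ 5 := by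
  set s := Real.sqrt (2 * Real.pi) with hs
  have hspos : 0 < s := Real.sqrt_pos.2 (by positivity)
  have hσ' : σ ≠ 0 := hσ.ne'
  have hs' : s ≠ 0 := hspos.ne'
  have hexp_meas : Measurable fun ω => Real.exp (-(d ω) ^ 2 / (2 * σ ^ 2)) := by
    exact Real.measurable_exp.comp (((hd.pow_const 2).neg).div_const _)
  have hexp_int : Integrable (fun ω => Real.exp (-(d ω) ^ 2 / (2 * σ ^ 2))) P := by
    apply (integrable_const (1:ℝ)).mono' hexp_meas.aestronglyMeasurable
    filter_upwards with ω
    rw [Real.norm_eq_abs, abs_of_pos (Real.exp_pos _)]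
    rw [Real.exp_le_one_iff]
    refine div_nonpos_of_nonpos_of_nonneg ?_ (by positivity)
    simpa using sq_nonneg (d ω)
  have ht : Integrable (fun ω => d ω ^ 2 / (2 * σ ^ 2)) P := h2.div_const _
  have hsub_int : Integrable (fun ω => Real.exp (-(d ω) ^ 2 / (2 * σ ^ 2)) - 1) P :=
    hexp_int.sub (integrable_const 1)
  have hg_int : Integrable
      (fun ω => Real.exp (-(d ω) ^ 2 / (2 * σ ^ 2)) - 1 + d ω ^ 2 / (2 * σ ^ 2)) P :=
    hsub_int.add ht
  have hIg : ∫ ω, (Real.exp (-(d ω) ^ 2 / (2 * σ ^ 2)) - 1 + d ω ^ 2 / (2 * σ ^ 2)) ∂P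
      = (∫ ω, Real.exp (-(d ω) ^ 2 / (2 * σ ^ 2)) ∂P) - 1
        + (∫ ω, d ω ^ 2 ∂P) / (2 * σ ^ 2) := by
    rw [integral_add hsub_int ht,
      integral_sub hexp_int (integrable_const 1), integral_const, integral_div]
    simp [measure_univ]
  have hbound : |∫ ω, (Real.exp (-(d ω) ^ 2 / (2 * σ ^ 2)) - 1 + d ω ^ 2 / (2 * σ ^ 2)) ∂P|
      ≤ (∫ ω, d ω ^ 4 ∂P) / (8 * σ ^ 4) := by
    calc |∫ ω, (Real.exp (-(d ω) ^ 2 / (2 * σ ^ 2)) - 1 + d ω ^ 2 / (2 * σ ^ 2)) ∂P|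
        ≤ ∫ ω, |Real.exp (-(d ω) ^ 2 / (2 * σ ^ 2)) - 1 + d ω ^ 2 / (2 * σ ^ 2)| ∂P :=
          by exact
            norm_integral_le_integral_norm (μ := P)
              (fun ω => Real.exp (-(d ω) ^ 2 / (2 * σ ^ 2)) - 1 + d ω ^ 2 / (2 * σ ^ 2))
      _ ≤ ∫ ω, d ω ^ 4 / (8 * σ ^ 4) ∂P := by
          apply integral_mono hg_int.abs (h4.div_const _)
          intro ω
          have h := exp_neg_quad_bound (t := d ω ^ 2 / (2 * σ ^ 2)) (by positivity)
          have e1 : -(d ω) ^ 2 / (2 * σ ^ 2) = -(d ω ^ 2 / (2 * σ ^ 2)) := by ring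
          have e2 : (d ω ^ 2 / (2 * σ ^ 2)) ^ 2 / 2 = d ω ^ 4 / (8 * σ ^ 4) := by
            field_simp; ring
          calc |Real.exp (-(d ω) ^ 2 / (2 * σ ^ 2)) - 1 + d ω ^ 2 / (2 * σ ^ 2)|
              = |Real.exp (-(d ω ^ 2 / (2 * σ ^ 2))) - (1 - d ω ^ 2 / (2 * σ ^ 2))| := by
                rw [e1]; ring_nf
            _ ≤ (d ω ^ 2 / (2 * σ ^ 2)) ^ 2 / 2 := h
            _ = d ω ^ 4 / (8 * σ ^ 4) := e2
      _ = (∫ ω, d ω ^ 4 ∂P) / (8 * σ ^ 4) := integral_div _ _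
  have hrw : (∫ ω, (1 / (s * σ)) * Real.exp (-(d ω) ^ 2 / (2 * σ ^ 2)) ∂P)
      - (1 / (s * σ) - (1 / (2 * s * σ ^ 3)) * ∫ ω, d ω ^ 2 ∂P)
      = (1 / (s * σ)) * ∫ ω, (Real.exp (-(d ω) ^ 2 / (2 * σ ^ 2)) - 1
          + d ω ^ 2 / (2 * σ ^ 2)) ∂P := by
    rw [integral_const_mul, hIg]
    have he : (1:ℝ) / (2 * s * σ ^ 3) = (1 / (s * σ)) * (1 / (2 * σ ^ 2)) := by
      field_simp
    rw [he]; ring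
  rw [hrw, abs_mul, abs_of_pos (by positivity : (0:ℝ) < 1 / (s * σ))]
  calc (1 / (s * σ)) * |∫ ω, (Real.exp (-(d ω) ^ 2 / (2 * σ ^ 2)) - 1
          + d ω ^ 2 / (2 * σ ^ 2)) ∂P|
      ≤ (1 / (s * σ)) * ((∫ ω, d ω ^ 4 ∂P) / (8 * σ ^ 4)) :=
        mul_le_mul_of_nonneg_left hbound (by positivity)
    _ = (∫ ω, d ω ^ 4 ∂P) / (8 * s) * σ⁻¹ ^ 5 := by
        rw [inv_pow]
        field_simp

theorem correntropy_large_bandwidth_limit {Ω : Type*} [MeasurableSpace Ω]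
    (P : Measure Ω) [IsProbabilityMeasure P]
    (x y : Ω → ℝ) (hx : Measurable x) (hy : Measurable y)
    (h4 : Integrable (fun ω => (x ω - y ω) ^ 4) P)
    (h2 : Integrable (fun ω => (x ω - y ω) ^ 2) P)
    (V : ℝ → ℝ)
    (hV : ∀ σ : ℝ, V σ = ∫ ω, (1 / (Real.sqrt (2 * Real.pi) * σ)) *
      Real.exp (-(x ω - y ω) ^ 2 / (2 * σ ^ 2)) ∂P) :
    (fun σ : ℝ => V σ - (1 / (Real.sqrt (2 * Real.pi) * σ)
        - (1 / (2 * Real.sqrt (2 * Real.pi) * σ ^ 3)) * ∫ ω, (x ω - y ω) ^ 2 ∂P))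
      =O[atTop] (fun σ : ℝ => σ⁻¹ ^ 5) ∧
    Tendsto (fun σ : ℝ => Real.sqrt (2 * Real.pi) * σ ^ 3 *
        (1 / (Real.sqrt (2 * Real.pi) * σ) - V σ)) atTop
      (nhds ((1 / 2) * ∫ ω, (x ω - y ω) ^ 2 ∂P)) := by
  have hspos : 0 < Real.sqrt (2 * Real.pi) := Real.sqrt_pos.2 (by positivity)
  set s := Real.sqrt (2 * Real.pi) with hs
  set E2 := ∫ ω, (x ω - y ω) ^ 2 ∂P with hE2
  set E4 := ∫ ω, (x ω - y ω) ^ 4 ∂P with hE4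
  have hE4nn : 0 ≤ E4 := integral_nonneg fun ω => by positivity
  have key : ∀ σ : ℝ, 0 < σ →
      |V σ - (1 / (s * σ) - (1 / (2 * s * σ ^ 3)) * E2)| ≤ E4 / (8 * s) * σ⁻¹ ^ 5 := by
    intro σ hσ
    rw [hV σ]
    exact key_est P (fun ω => x ω - y ω) (hx.sub hy) h4 h2 hσ
  constructor
  · rw [isBigO_iff]
    refine ⟨E4 / (8 * s), ?_⟩
    filter_upwards [eventually_gt_atTop 0] with σ hσ
    rw [Real.norm_eq_abs, Real.norm_eq_abs, abs_of_pos (by positivity : (0:ℝ) < σ⁻¹ ^ 5)]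
    exact key σ hσ
  · have hg0 : Tendsto (fun σ : ℝ => E4 / 8 * σ⁻¹ ^ 2) atTop (nhds 0) := by
      have h1 : Tendsto (fun σ : ℝ => σ⁻¹ ^ 2) atTop (nhds 0) := by
        have h0 : Tendsto (fun σ : ℝ => σ⁻¹) atTop (nhds 0) := tendsto_inv_atTop_zero
        simpa [pow_two] using h0.mul h0
      simpa using h1.const_mul (E4 / 8)
    have hr : Tendsto
        (fun σ : ℝ => s * σ ^ 3 * (V σ - (1 / (s * σ) - (1 / (2 * s * σ ^ 3)) * E2)))
        atTop (nhds 0) := by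
      apply squeeze_zero_norm' _ hg0
      filter_upwards [eventually_ge_atTop 1] with σ hσ
      have hσ0 : (0:ℝ) < σ := lt_of_lt_of_le one_pos hσ
      rw [Real.norm_eq_abs, abs_mul, abs_of_pos (by positivity : (0:ℝ) < s * σ ^ 3)]
      calc s * σ ^ 3 * |V σ - (1 / (s * σ) - (1 / (2 * s * σ ^ 3)) * E2)|
          ≤ s * σ ^ 3 * (E4 / (8 * s) * σ⁻¹ ^ 5) :=
            mul_le_mul_of_nonneg_left (key σ hσ0) (by positivity)
        _ = E4 / 8 * σ⁻¹ ^ 2 := by field_simp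
    have heq : (fun σ : ℝ => E2 / 2
          - s * σ ^ 3 * (V σ - (1 / (s * σ) - (1 / (2 * s * σ ^ 3)) * E2)))
        =ᶠ[atTop] (fun σ : ℝ => s * σ ^ 3 * (1 / (s * σ) - V σ)) := by
      filter_upwards [eventually_gt_atTop 0] with σ hσ
      have hσ' : σ ≠ 0 := hσ.ne'
      have hs' : s ≠ 0 := hspos.ne'
      field_simp
      ring
    have hlim : Tendsto (fun σ : ℝ => E2 / 2
          - s * σ ^ 3 * (V σ - (1 / (s * σ) - (1 / (2 * s * σ ^ 3)) * E2)))
        atTop (nhds (E2 / 2 - 0)) := tendsto_const_nhds.sub hr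
    rw [sub_zero] at hlim
    have := hlim.congr' heq
    convert this using 2
    ring
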